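/- Let m be a finite Eulerian multidigraph on V whose underlying undirected multigraph is connected, with at least two vertices, and suppose m is not strongly 2-edge-connected. Then there is a nonempty proper subset A of V such that exactly one arc goes from A to V∖A and exactly one arc goes from V∖A to A. -/

import Mathlib

/-- A multidigraph is *Eulerian* if every vertex has in-degree equal to out-degree. -/
def IsEulerian {V : Type*} [Fintype V] (m : V → V → ℕ) : Prop :=
  ∀ v : V, ∑ u, m u v = ∑ u, m v u

/-- `p` is the arc-multiplicity function of a directed path from `s` to `t`:
there is a sequence of pairwise distinct vertices `s = w 0, …, w k = t` such that
each arc `w i → w (i+1)` has multiplicity `1` and all other multiplicities are `0`. -/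
def IsPath {V : Type*} (p : V → V → ℕ) (s t : V) : Prop :=
  ∃ (k : ℕ) (w : Fin (k + 1) → V), Function.Injective w ∧
    w 0 = s ∧ w (Fin.last k) = t ∧
    (∀ i : Fin k, p (w i.castSucc) (w i.succ) = 1) ∧
    (∀ u v : V, (∀ i : Fin k, ¬(u = w i.castSucc ∧ v = w i.succ)) → p u v = 0)

/-- A multidigraph `m` is *strongly 2-edge-connected* if for any two pairs of
vertices `u₁, u₂` and `v₁, v₂` there are directed paths `p₁` starting at `u₁` and
`p₂` starting at `u₂`, one ending at `v₁` and the other at `v₂`, which are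
arc-disjoint in the sense that the sum of their arc-multiplicity functions is a
sub-multidigraph of `m`. -/
def Strongly2EdgeConnected {V : Type*} (m : V → V → ℕ) : Prop :=
  ∀ u₁ u₂ v₁ v₂ : V, ∃ p₁ p₂ : V → V → ℕ,
    ((IsPath p₁ u₁ v₁ ∧ IsPath p₂ u₂ v₂) ∨ (IsPath p₁ u₁ v₂ ∧ IsPath p₂ u₂ v₁)) ∧
    ∀ u v, p₁ u v + p₂ u v ≤ m u v

/-- The underlying undirected multigraph of `m` is connected: any two vertices are
joined by a sequence of vertices in which consecutive vertices are joined by an arc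
of `m` in some direction. -/
def UnderlyingConnected {V : Type*} (m : V → V → ℕ) : Prop :=
  ∀ u v : V, Relation.ReflTransGen (fun a b => 1 ≤ m a b ∨ 1 ≤ m b a) u v

set_option linter.unusedSectionVars false

section Lemmas
variable {V : Type*} [Fintype V] [DecidableEq V]

def zdiv {V : Type*} [Fintype V] (F : V → V → ℤ) (x : V) : ℤ :=
  (∑ u, F x u) - (∑ u, F u x)

lemma chain_suffix {r : V → V → Prop} {c : V} {l : List V} (hch : List.Chain r c l)
    {s : V} (hs : s ∈ c :: l) :
    ∃ l₂ : List V, List.Chain r s l₂ ∧ (s :: l₂) <:+ (c :: l) := by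
  obtain ⟨L₁, L₂, hL⟩ := List.append_of_mem hs
  have hch' : List.Chain' r (c :: l) := hch
  rw [hL] at hch'
  rw [show List.Chain' r (L₁ ++ s :: L₂) ↔ _ from List.isChain_split] at hch'
  exact ⟨L₂, hch'.2, ⟨L₁, hL.symm⟩⟩

lemma exists_nodup_chain {r : V → V → Prop} {s t : V} (h : Relation.ReflTransGen r s t) :
    ∃ l : List V, List.Chain r s l ∧ (s :: l).Nodup ∧
      (s :: l).getLast (List.cons_ne_nil _ _) = t := by
  induction h using Relation.ReflTransGen.head_induction_on with
  | refl => exact ⟨[], List.Chain.nil, List.nodup_singleton t, rfl⟩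
  | @head a c h' _ ih =>
    obtain ⟨l, hch, hnd, hlast⟩ := ih
    by_cases ha : a ∈ c :: l
    · obtain ⟨l₂, hch₂, hsuf⟩ := chain_suffix hch ha
      refine ⟨l₂, hch₂, hsuf.sublist.nodup hnd, ?_⟩
      obtain ⟨pre, hpre⟩ := hsuf
      have h1 : (c :: l).getLast? = some t := by
        rw [List.getLast?_eq_getLast (List.cons_ne_nil _ _), hlast]
      rw [← hpre, List.getLast?_append_of_ne_nil _ (List.cons_ne_nil _ _)] at h1
      rw [List.getLast?_eq_getLast (List.cons_ne_nil _ _)] at h1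
      exact Option.some_injective _ h1
    · exact ⟨c :: l, List.Chain.cons h' hch, List.nodup_cons.mpr ⟨ha, hnd⟩, hlast⟩

lemma exists_simple_chain {r : V → V → Prop} {s t : V} (h : Relation.ReflTransGen r s t) :
    ∃ (k : ℕ) (w : Fin (k + 1) → V), Function.Injective w ∧
      w 0 = s ∧ w (Fin.last k) = t ∧ ∀ i : Fin k, r (w i.castSucc) (w i.succ) := by
  obtain ⟨l, hch, hnd, hlast⟩ := exists_nodup_chain h
  refine ⟨l.length, fun i => (s :: l).get (i.cast (by simp)), ?_, rfl, ?_, ?_⟩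
  · intro i j hij
    have := List.nodup_iff_injective_get.mp hnd hij
    simpa [Fin.ext_iff] using this
  · rw [← hlast, List.getLast_eq_getElem]
    congr 1
  · intro i
    have hch' : List.Chain' r (s :: l) := hch
    have := List.isChain_iff_getElem.mp hch' i (by simpa using i.isLt)
    simpa [Fin.cast] using this
lemma zdiv_sub (F G : V → V → ℤ) (x : V) :
    zdiv (fun u v => F u v - G u v) x = zdiv F x - zdiv G x := by
  simp only [zdiv, Finset.sum_sub_distrib]; ring

lemma path_of_chain {F : V → V → ℤ} {s t : V} {k : ℕ} {w : Fin (k+1) → V}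
    (hinj : Function.Injective w) (h0 : w 0 = s) (hl : w (Fin.last k) = t)
    (hF0 : ∀ u v, 0 ≤ F u v) (hstep : ∀ i : Fin k, 0 < F (w i.castSucc) (w i.succ)) :
    ∃ p : V → V → ℕ, IsPath p s t ∧ (∀ u v, (p u v : ℤ) ≤ F u v) ∧
      ∀ x, zdiv (fun u v => (p u v : ℤ)) x
        = (if x = s then 1 else 0) - (if x = t then 1 else 0) := by
  classical
  refine ⟨fun u v => if ∃ i : Fin k, w i.castSucc = u ∧ w i.succ = v then 1 else 0, ?_, ?_, ?_⟩
    <;> set p : V → V → ℕ :=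
      (fun u v => if ∃ i : Fin k, w i.castSucc = u ∧ w i.succ = v then 1 else 0) with hp
  case refine_1 =>
    refine ⟨k, w, hinj, h0, hl, fun i => if_pos ⟨i, rfl, rfl⟩, ?_⟩
    intro u v huv
    refine if_neg ?_
    rintro ⟨j, hj1, hj2⟩
    exact huv j ⟨hj1.symm, hj2.symm⟩
  case refine_2 =>
    intro u v
    by_cases h : ∃ i : Fin k, w i.castSucc = u ∧ w i.succ = v
    · obtain ⟨i, h1, h2⟩ := h
      have := hstep i
      rw [h1, h2] at this
      have : p u v = 1 := if_pos ⟨i, h1, h2⟩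
      rw [this]
      have := hstep i; rw [h1, h2] at this
      omega
    · have : p u v = 0 := if_neg h
      rw [this]
      simpa using hF0 u v
  case refine_3 =>
    have harc : ∀ i : Fin k, p (w i.castSucc) (w i.succ) = 1 := fun i => if_pos ⟨i, rfl, rfl⟩
    have hrow : ∀ x, (∑ u, (p x u : ℤ)) = if ∃ i : Fin k, w i.castSucc = x then 1 else 0 := by
      intro x
      by_cases hx : ∃ i : Fin k, w i.castSucc = x
      · obtain ⟨i₀, hi₀⟩ := hx
        rw [if_pos ⟨i₀, hi₀⟩]
        have hcong : ∀ u, (p x u : ℤ) = if u = w i₀.succ then 1 else 0 := by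
          intro u
          by_cases hu : u = w i₀.succ
          · subst hu
            rw [← hi₀, harc i₀, if_pos rfl, Nat.cast_one]
          · rw [if_neg hu]
            have : p x u = 0 := by
              refine if_neg ?_
              rintro ⟨j, hj1, hj2⟩
              have hji : j = i₀ := Fin.castSucc_injective _ (hinj (hj1.trans hi₀.symm))
              apply hu
              rw [← hj2, hji]
            rw [this, Nat.cast_zero]
        rw [Finset.sum_congr rfl fun u _ => hcong u, Finset.sum_ite_eq']
        simp
      · rw [if_neg hx]
        have : ∀ u, p x u = 0 := by
          intro u
          refine if_neg ?_
          rintro ⟨j, hj1, _⟩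
          exact hx ⟨j, hj1⟩
        simp [this]
    have hcol : ∀ x, (∑ u, (p u x : ℤ)) = if ∃ i : Fin k, w i.succ = x then 1 else 0 := by
      intro x
      by_cases hx : ∃ i : Fin k, w i.succ = x
      · obtain ⟨i₀, hi₀⟩ := hx
        rw [if_pos ⟨i₀, hi₀⟩]
        have hcong : ∀ u, (p u x : ℤ) = if u = w i₀.castSucc then 1 else 0 := by
          intro u
          by_cases hu : u = w i₀.castSucc
          · subst hu
            rw [← hi₀, harc i₀, if_pos rfl, Nat.cast_one]
          · rw [if_neg hu]
            have : p u x = 0 := by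
              refine if_neg ?_
              rintro ⟨j, hj1, hj2⟩
              have hji : j = i₀ := Fin.succ_injective _ (hinj (hj2.trans hi₀.symm))
              apply hu
              rw [← hj1, hji]
            rw [this, Nat.cast_zero]
        rw [Finset.sum_congr rfl fun u _ => hcong u, Finset.sum_ite_eq']
        simp
      · rw [if_neg hx]
        have : ∀ u, p u x = 0 := by
          intro u
          refine if_neg ?_
          rintro ⟨j, _, hj2⟩
          exact hx ⟨j, hj2⟩
        simp [this]
    intro x
    show (∑ u, (p x u : ℤ)) - (∑ u, (p u x : ℤ)) = _
    rw [hrow, hcol, ← h0, ← hl]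
    have f3 : (∃ i : Fin k, w i.castSucc = x) → x = w (Fin.last k) → False := by
      rintro ⟨i, hi⟩ hxl
      have := hinj (hi.trans hxl)
      have hlt := i.isLt
      simp [Fin.ext_iff, Fin.last] at this
      omega
    have f4 : (∃ i : Fin k, w i.succ = x) → x = w 0 → False := by
      rintro ⟨i, hi⟩ hx0
      have := hinj (hi.trans hx0)
      simp [Fin.ext_iff] at this
    have f1 : (∃ i : Fin k, w i.castSucc = x) → ¬(∃ i : Fin k, w i.succ = x) → x = w 0 := by
      rintro ⟨i, hi⟩ hB
      by_cases hi0 : (i : ℕ) = 0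
      · rw [← hi]
        congr 1
        simp [Fin.ext_iff, hi0]
      · exfalso
        apply hB
        have hik := i.isLt
        refine ⟨⟨(i : ℕ) - 1, by omega⟩, ?_⟩
        rw [← hi]
        congr 1
        simp [Fin.ext_iff]
        omega
    have f2 : (∃ i : Fin k, w i.succ = x) → ¬(∃ i : Fin k, w i.castSucc = x) →
        x = w (Fin.last k) := by
      rintro ⟨j, hj⟩ hA
      have hjk := j.isLt
      by_cases hjl : (j : ℕ) + 1 = k
      · rw [← hj]
        congr 1
        simp [Fin.ext_iff, Fin.last, hjl]
      · exfalso
        apply hA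
        refine ⟨⟨(j : ℕ) + 1, by omega⟩, ?_⟩
        rw [← hj]
        congr 1
    have f6 : x = w 0 → ¬x = w (Fin.last k) → (∃ i : Fin k, w i.castSucc = x) := by
      intro hx0 hxl
      have hk : 0 < k := by
        by_contra hk
        have hk0 : k = 0 := by omega
        subst hk0
        exact hxl (by rw [hx0]; congr 1)
      exact ⟨⟨0, hk⟩, by rw [hx0]; congr 1⟩
    have f7 : x = w (Fin.last k) → ¬x = w 0 → (∃ i : Fin k, w i.succ = x) := by
      intro hxl hx0
      have hk : 0 < k := by
        by_contra hk
        have hk0 : k = 0 := by omega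
        subst hk0
        exact hx0 (by rw [hxl]; congr 1)
      refine ⟨⟨k - 1, by omega⟩, ?_⟩
      rw [hxl]
      congr 1
      simp [Fin.ext_iff, Fin.last]
      omega
    by_cases hA : ∃ i : Fin k, w i.castSucc = x
    · by_cases hB : ∃ i : Fin k, w i.succ = x
      · rw [if_pos hA, if_pos hB, if_neg (fun h => f4 hB h), if_neg (fun h => f3 hA h)]
        norm_num
      · rw [if_pos hA, if_neg hB, if_pos (f1 hA hB), if_neg (fun h => f3 hA h)]
    · by_cases hB : ∃ i : Fin k, w i.succ = x
      · rw [if_neg hA, if_pos hB, if_neg (fun h => f4 hB h), if_pos (f2 hB hA)]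
      · rw [if_neg hA, if_neg hB]
        by_cases hx0 : x = w 0
        · by_cases hxl : x = w (Fin.last k)
          · rw [if_pos hx0, if_pos hxl]
            norm_num
          · exact absurd (f6 hx0 hxl) hA
        · by_cases hxl : x = w (Fin.last k)
          · exact absurd (f7 hxl hx0) hB
          · rw [if_neg hx0, if_neg hxl]
lemma sum_zdiv (F : V → V → ℤ) (A : Finset V) :
    ∑ x ∈ A, zdiv F x
      = (∑ a ∈ A, ∑ b ∈ Aᶜ, F a b) - (∑ b ∈ Aᶜ, ∑ a ∈ A, F b a) := by
  simp only [zdiv]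
  have h1 : ∀ x : V, (∑ u, F x u) = (∑ u ∈ A, F x u) + ∑ u ∈ Aᶜ, F x u :=
    fun x => (Finset.sum_add_sum_compl A _).symm
  have h2 : ∀ x : V, (∑ u, F u x) = (∑ u ∈ A, F u x) + ∑ u ∈ Aᶜ, F u x :=
    fun x => (Finset.sum_add_sum_compl A _).symm
  simp only [h1, h2]
  rw [Finset.sum_sub_distrib, Finset.sum_add_distrib, Finset.sum_add_distrib]
  rw [Finset.sum_comm (s := A) (t := A) (f := fun x u => F u x)]
  rw [Finset.sum_comm (s := A) (t := Aᶜ) (f := fun x u => F u x)]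
  ring

lemma eulerian_zdiv {m : V → V → ℕ} (hm : IsEulerian m) (x : V) :
    zdiv (fun u v => (m u v : ℤ)) x = 0 := by
  have := hm x
  simp only [zdiv]
  push_cast
  rw [← Nat.cast_sum, ← Nat.cast_sum, this]
  ring

lemma eulerian_cut {m : V → V → ℕ} (hm : IsEulerian m) (A : Finset V) :
    ∑ a ∈ A, ∑ b ∈ Aᶜ, m a b = ∑ b ∈ Aᶜ, ∑ a ∈ A, m b a := by
  have h := sum_zdiv (fun u v => (m u v : ℤ)) A
  rw [Finset.sum_congr rfl (fun x _ => eulerian_zdiv hm x)] at h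
  simp only [Finset.sum_const_zero] at h
  have : ((∑ a ∈ A, ∑ b ∈ Aᶜ, m a b : ℕ) : ℤ) = ((∑ b ∈ Aᶜ, ∑ a ∈ A, m b a : ℕ) : ℤ) := by
    push_cast
    omega
  exact_mod_cast this

lemma crossing {r : V → V → Prop} {A : Finset V} {a b : V} (ha : a ∈ A) (hb : b ∉ A)
    (h : Relation.ReflTransGen r a b) : ∃ x ∈ A, ∃ y, y ∉ A ∧ r x y := by
  induction h with
  | refl => exact absurd ha hb
  | @tail c d hac hcd ih =>
    by_cases hc : c ∈ A
    · exact ⟨c, hc, d, hb, hcd⟩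
    · exact ih hc

lemma cut_pos {m : V → V → ℕ} (hm : IsEulerian m) (hconn : ∀ u v : V,
      Relation.ReflTransGen (fun a b => 1 ≤ m a b ∨ 1 ≤ m b a) u v)
    {A : Finset V} (hA : A.Nonempty) (hA' : A ≠ Finset.univ) :
    1 ≤ ∑ a ∈ A, ∑ b ∈ Aᶜ, m a b := by
  by_contra h
  have hzero : ∑ a ∈ A, ∑ b ∈ Aᶜ, m a b = 0 := by omega
  have hzero' : ∑ b ∈ Aᶜ, ∑ a ∈ A, m b a = 0 := by rw [← eulerian_cut hm]; exact hzero
  obtain ⟨a, ha⟩ := hA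
  obtain ⟨b, hb⟩ : ∃ b, b ∉ A := by
    by_contra hb
    push_neg at hb
    exact hA' (Finset.eq_univ_iff_forall.mpr hb)
  obtain ⟨x, hx, y, hy, hr⟩ := crossing ha hb (hconn a b)
  have hyc : y ∈ Aᶜ := Finset.mem_compl.mpr hy
  rcases hr with h1 | h1
  · have : m x y = 0 := by
      have := Finset.sum_eq_zero_iff.mp hzero x hx
      exact Finset.sum_eq_zero_iff.mp this y hyc
    omega
  · have : m y x = 0 := by
      have := Finset.sum_eq_zero_iff.mp hzero' y hyc
      exact Finset.sum_eq_zero_iff.mp this x hx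
    omega
lemma extract {F : V → V → ℤ} (hF0 : ∀ u v, 0 ≤ F u v) {s : V} (hs : 0 < zdiv F s) :
    ∃ (t : V) (p : V → V → ℕ), zdiv F t < 0 ∧ IsPath p s t ∧
      (∀ u v, (p u v : ℤ) ≤ F u v) ∧
      ∀ x, zdiv (fun u v => F u v - (p u v : ℤ)) x
        = zdiv F x - (if x = s then 1 else 0) + (if x = t then 1 else 0) := by
  classical
  set r : V → V → Prop := fun a b => 0 < F a b with hr
  set R : Finset V := Finset.univ.filter (Relation.ReflTransGen r s) with hR
  have hsR : s ∈ R := Finset.mem_filter.mpr ⟨Finset.mem_univ _, Relation.ReflTransGen.refl⟩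
  have hcut : ∀ a ∈ R, ∀ b ∈ Rᶜ, F a b = 0 := by
    intro a ha b hb
    have hb' : b ∉ R := Finset.mem_compl.mp hb
    have : ¬ r a b := by
      intro hrab
      exact hb' (Finset.mem_filter.mpr ⟨Finset.mem_univ _,
        (Finset.mem_filter.mp ha).2.tail hrab⟩)
    have := hF0 a b
    rw [hr] at *
    omega
  have hsum : ∑ x ∈ R, zdiv F x ≤ 0 := by
    rw [sum_zdiv]
    have h1 : ∑ a ∈ R, ∑ b ∈ Rᶜ, F a b = 0 :=
      Finset.sum_eq_zero fun a ha => Finset.sum_eq_zero fun b hb => hcut a ha b hb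
    have h2 : 0 ≤ ∑ b ∈ Rᶜ, ∑ a ∈ R, F b a :=
      Finset.sum_nonneg fun b _ => Finset.sum_nonneg fun a _ => hF0 b a
    omega
  have hex : ∃ t ∈ R, zdiv F t < 0 := by
    by_contra hno
    push_neg at hno
    have : (0:ℤ) < ∑ x ∈ R, zdiv F x := by
      have h1 : ∑ x ∈ R \ {s}, zdiv F x ≥ 0 :=
        Finset.sum_nonneg fun x hx => hno x (Finset.mem_sdiff.mp hx).1
      have h2 : ∑ x ∈ R, zdiv F x = zdiv F s + ∑ x ∈ R \ {s}, zdiv F x :=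
        (Finset.add_sum_erase R (zdiv F) hsR).symm.trans (by rw [Finset.erase_eq])
      omega
    omega
  obtain ⟨t, htR, ht⟩ := hex
  have hreach : Relation.ReflTransGen r s t := (Finset.mem_filter.mp htR).2
  obtain ⟨k, w, hinj, h0, hl, hstep⟩ := exists_simple_chain hreach
  obtain ⟨p, hpath, hle, hdiv⟩ := path_of_chain hinj h0 hl hF0 hstep
  refine ⟨t, p, ht, hpath, hle, fun x => ?_⟩
  rw [zdiv_sub, hdiv x]
  ring
def arcE (a b : V) : V → V → ℤ := fun u v => if u = a then if v = b then 1 else 0 else 0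

lemma arcE_nonneg (a b u v : V) : 0 ≤ arcE a b u v := by
  unfold arcE; split_ifs <;> norm_num

lemma arcE_eq_zero {a b u v : V} (h : u ≠ a ∨ v ≠ b) : arcE a b u v = 0 := by
  unfold arcE
  rcases h with h | h
  · rw [if_neg h]
  · split_ifs <;> simp_all

lemma arcE_self (a b : V) : arcE a b a b = 1 := by simp [arcE]

lemma zdiv_arcE (a b x : V) :
    zdiv (arcE a b) x = (if x = a then 1 else 0) - (if x = b then 1 else 0) := by
  unfold zdiv arcE
  have h1 : (∑ u, if x = a then if u = b then (1:ℤ) else 0 else 0)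
      = if x = a then 1 else 0 := by
    by_cases hx : x = a
    · simp only [if_pos hx]
      rw [Finset.sum_ite_eq' Finset.univ b (fun _ => (1:ℤ))]
      simp
    · simp only [if_neg hx, Finset.sum_const_zero]
  have h2 : (∑ u, if u = a then if x = b then (1:ℤ) else 0 else 0)
      = if x = b then 1 else 0 := by
    rw [Finset.sum_ite_eq' Finset.univ a (fun _ => if x = b then (1:ℤ) else 0)]
    simp
  rw [h1, h2]

lemma zdiv_add (F G : V → V → ℤ) (x : V) :
    zdiv (fun u v => F u v + G u v) x = zdiv F x + zdiv G x := by
  simp only [zdiv, Finset.sum_add_distrib]; ring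

lemma zdiv_sub' (F G : V → V → ℤ) (x : V) :
    zdiv (fun u v => F u v - G u v) x = zdiv F x - zdiv G x := by
  simp only [zdiv, Finset.sum_sub_distrib]; ring

lemma augment (m : V → V → ℕ) : ∀ (k : ℕ) (F : V → V → ℤ),
    (∀ u v, 0 ≤ F u v) → (∀ u v, F u v ≤ (m u v : ℤ)) →
    ∀ (w : Fin (k+1) → V), Function.Injective w →
    (∀ i : Fin k, F (w i.castSucc) (w i.succ) < (m (w i.castSucc) (w i.succ) : ℤ)
       ∨ 0 < F (w i.succ) (w i.castSucc)) →
    ∃ F' : V → V → ℤ, (∀ u v, 0 ≤ F' u v) ∧ (∀ u v, F' u v ≤ (m u v : ℤ)) ∧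
      ∀ x, zdiv F' x = zdiv F x + (if x = w 0 then 1 else 0)
        - (if x = w (Fin.last k) then 1 else 0) := by
  intro k
  induction k with
  | zero =>
    intro F hF0 hFm w _ _
    refine ⟨F, hF0, hFm, fun x => ?_⟩
    have : w (Fin.last 0) = w 0 := by congr 1
    rw [this]; ring
  | succ k ih =>
    intro F hF0 hFm w hinj hstep
    have h0 := hstep 0
    set a : V := w ((0 : Fin (k+1)).castSucc) with ha
    set b : V := w ((0 : Fin (k+1)).succ) with hb
    obtain ⟨F₁, hF₁0, hF₁m, hF₁div, hF₁eq⟩ :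
        ∃ F₁ : V → V → ℤ, (∀ u v, 0 ≤ F₁ u v) ∧ (∀ u v, F₁ u v ≤ (m u v : ℤ)) ∧
          (∀ x, zdiv F₁ x = zdiv F x + (if x = a then 1 else 0) - (if x = b then 1 else 0)) ∧
          (∀ x y, (x ≠ a ∧ x ≠ b) ∨ (y ≠ a ∧ y ≠ b) → F₁ x y = F x y) := by
      rcases h0 with h0 | h0
      · refine ⟨fun u v => F u v + arcE a b u v, fun u v => ?_, fun u v => ?_, fun x => ?_,
          fun x y hxy => ?_⟩
        · show 0 ≤ F u v + arcE a b u v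
          have := hF0 u v; have := arcE_nonneg a b u v; omega
        · show F u v + arcE a b u v ≤ (m u v : ℤ)
          by_cases hab : u = a ∧ v = b
          · obtain ⟨h1, h2⟩ := hab; subst h1; subst h2
            rw [arcE_self]
            omega
          · rw [arcE_eq_zero (by tauto)]
            have := hFm u v; omega
        · rw [zdiv_add F (arcE a b) x, zdiv_arcE]; ring
        · show F x y + arcE a b x y = F x y
          rw [arcE_eq_zero (by tauto)]; ring
      · refine ⟨fun u v => F u v - arcE b a u v, fun u v => ?_, fun u v => ?_, fun x => ?_,
          fun x y hxy => ?_⟩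
        · show 0 ≤ F u v - arcE b a u v
          by_cases hab : u = b ∧ v = a
          · obtain ⟨h1, h2⟩ := hab; subst h1; subst h2
            rw [arcE_self]
            omega
          · rw [arcE_eq_zero (by tauto)]
            have := hF0 u v; omega
        · show F u v - arcE b a u v ≤ (m u v : ℤ)
          have := hFm u v; have := arcE_nonneg b a u v; omega
        · rw [zdiv_sub' F (arcE b a) x, zdiv_arcE]; ring
        · show F x y - arcE b a x y = F x y
          rw [arcE_eq_zero (by tauto)]; ring
    set w' : Fin (k+1) → V := fun i => w i.succ with hw'
    have hinj' : Function.Injective w' := fun i j hij =>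
      Fin.succ_injective _ (hinj hij)
    have ne2 : ∀ i : Fin k, w i.succ.succ ≠ a ∧ w i.succ.succ ≠ b := by
      intro i
      constructor
      · intro h
        have h2 := hinj h
        rw [Fin.ext_iff] at h2
        simp at h2
      · intro h
        have h2 := hinj h
        rw [Fin.ext_iff] at h2
        simp at h2
    have hstep' : ∀ i : Fin k,
        F₁ (w' i.castSucc) (w' i.succ) < (m (w' i.castSucc) (w' i.succ) : ℤ)
          ∨ 0 < F₁ (w' i.succ) (w' i.castSucc) := by
      intro i
      have hs := hstep i.succ
      have e1 : w' i.castSucc = w i.succ.castSucc := by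
        show w i.castSucc.succ = w i.succ.castSucc
        congr 1
      have e2 : w' i.succ = w i.succ.succ := rfl
      rw [e1, e2, hF₁eq _ _ (Or.inr (ne2 i)), hF₁eq _ _ (Or.inl (ne2 i))]
      exact hs
    obtain ⟨F', hF'0, hF'm, hF'div⟩ := ih F₁ hF₁0 hF₁m w' hinj' hstep'
    refine ⟨F', hF'0, hF'm, fun x => ?_⟩
    rw [hF'div x, hF₁div x]
    have e3 : w' 0 = b := rfl
    have e4 : w' (Fin.last k) = w (Fin.last (k+1)) := by
      show w (Fin.last k).succ = w (Fin.last (k+1))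
      congr 1
    have e5 : a = w 0 := by rw [ha, Fin.castSucc_zero]
    rw [e3, e4, e5]
    ring

end Lemmas

section Aux
variable {V : Type*} [Fintype V] [DecidableEq V]

lemma isPath_zero {V : Type*} (s : V) : IsPath (fun _ _ => 0) s s :=
  ⟨0, fun _ => s, fun a b _ => Fin.ext (by omega), rfl, rfl,
    fun i => i.elim0, fun _ _ _ => rfl⟩

/-- Strong connectivity: an Eulerian connected multidigraph has a path between any
two vertices, together with its divergence identity. -/
lemma exists_path_le {m : V → V → ℕ} (hm : IsEulerian m)
    (hconn : UnderlyingConnected m) (s t : V) :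
    ∃ p : V → V → ℕ, IsPath p s t ∧ (∀ u v, p u v ≤ m u v) ∧
      ∀ x, zdiv (fun u v => (p u v : ℤ)) x
        = (if x = s then 1 else 0) - (if x = t then 1 else 0) := by
  classical
  set R : Finset V := Finset.univ.filter
    (Relation.ReflTransGen (fun a b => 1 ≤ m a b) s) with hR
  by_cases ht : t ∈ R
  · have hreach := (Finset.mem_filter.mp ht).2
    have hreach' : Relation.ReflTransGen (fun a b => (0:ℤ) < (m a b : ℤ)) s t :=
      Relation.ReflTransGen.mono (fun a b h => by exact_mod_cast h) s t hreach
    obtain ⟨k, w, hinj, h0, hl, hstep⟩ := exists_simple_chain hreach'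
    obtain ⟨p, hp, hle, hdiv⟩ := path_of_chain (F := fun u v => ((m u v : ℕ) : ℤ)) hinj h0 hl
      (fun u v => Int.natCast_nonneg _) hstep
    exact ⟨p, hp, fun u v => by exact_mod_cast hle u v, hdiv⟩
  · exfalso
    have hsR : s ∈ R := Finset.mem_filter.mpr ⟨Finset.mem_univ _, Relation.ReflTransGen.refl⟩
    have h1 := cut_pos hm hconn (A := R) ⟨s, hsR⟩ (fun h => ht (by rw [h]; exact Finset.mem_univ t))
    have h2 : ∑ a ∈ R, ∑ b ∈ Rᶜ, m a b = 0 := by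
      refine Finset.sum_eq_zero fun a ha => Finset.sum_eq_zero fun b hb => ?_
      by_contra hmab
      have hab : 1 ≤ m a b := by omega
      have : b ∈ R := Finset.mem_filter.mpr ⟨Finset.mem_univ _,
        (Finset.mem_filter.mp ha).2.tail hab⟩
      exact (Finset.mem_compl.mp hb) this
    omega
end Aux

/-- A finite Eulerian multidigraph with connected underlying
multigraph and at least two vertices which is not strongly 2-edge-connected has a
nonempty proper vertex subset `A` with exactly one arc from `A` to its complement
and exactly one arc from the complement to `A`. -/
theorem not_strongly2EdgeConnected_two_arc_cut {V : Type*} [Fintype V] [DecidableEq V]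
    (m : V → V → ℕ) (hm : IsEulerian m) (hconn : UnderlyingConnected m)
    (hcard : 2 ≤ Fintype.card V) (hn2 : ¬ Strongly2EdgeConnected m) :
    ∃ A : Finset V, A.Nonempty ∧ A ≠ Finset.univ ∧
      (∑ a ∈ A, ∑ b ∈ Aᶜ, m a b = 1) ∧ (∑ b ∈ Aᶜ, ∑ a ∈ A, m b a = 1) := by
  classical
  simp only [Strongly2EdgeConnected, not_forall] at hn2
  obtain ⟨u₁, u₂, v₁, v₂, hno⟩ := hn2
  -- degenerate cases: a source coincides with a sink
  by_cases h11 : u₁ = v₁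
  · subst h11
    obtain ⟨p₂, hp₂, hle, -⟩ := exists_path_le hm hconn u₂ v₂
    exact absurd ⟨fun _ _ => 0, p₂, Or.inl ⟨isPath_zero u₁, hp₂⟩,
      fun u v => by simpa using hle u v⟩ hno
  by_cases h12 : u₁ = v₂
  · subst h12
    obtain ⟨p₂, hp₂, hle, -⟩ := exists_path_le hm hconn u₂ v₁
    exact absurd ⟨fun _ _ => 0, p₂, Or.inr ⟨isPath_zero u₁, hp₂⟩,
      fun u v => by simpa using hle u v⟩ hno
  by_cases h21 : u₂ = v₁
  · subst h21
    obtain ⟨p₁, hp₁, hle, -⟩ := exists_path_le hm hconn u₁ v₂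
    exact absurd ⟨p₁, fun _ _ => 0, Or.inr ⟨hp₁, isPath_zero u₂⟩,
      fun u v => by simpa using hle u v⟩ hno
  by_cases h22 : u₂ = v₂
  · subst h22
    obtain ⟨p₁, hp₁, hle, -⟩ := exists_path_le hm hconn u₁ v₁
    exact absurd ⟨p₁, fun _ _ => 0, Or.inl ⟨hp₁, isPath_zero u₂⟩,
      fun u v => by simpa using hle u v⟩ hno
  -- main case
  obtain ⟨p₀, hp₀, hle₀, hdiv₀⟩ := exists_path_le hm hconn u₁ v₁
  set F : V → V → ℤ := fun u v => (p₀ u v : ℤ) with hF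
  have hF0 : ∀ u v, 0 ≤ F u v := fun u v => Int.natCast_nonneg _
  have hFm : ∀ u v, F u v ≤ (m u v : ℤ) := fun u v => by
    show ((p₀ u v : ℤ)) ≤ _
    exact_mod_cast hle₀ u v
  have hFdiv : ∀ x, zdiv F x = (if x = u₁ then 1 else 0) - (if x = v₁ then 1 else 0) := hdiv₀
  set r : V → V → Prop := fun a b => F a b < (m a b : ℤ) ∨ 0 < F b a with hr
  set R : Finset V := Finset.univ.filter (Relation.ReflTransGen r u₂) with hRdef
  by_cases hv₂ : v₂ ∈ R
  · -- augmenting path exists: build two arc-disjoint paths, contradiction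
    exfalso
    have hreach : Relation.ReflTransGen r u₂ v₂ := (Finset.mem_filter.mp hv₂).2
    obtain ⟨k, w, hinj, h0, hl, hstep⟩ := exists_simple_chain hreach
    obtain ⟨F', h'0, h'm, h'div⟩ := augment m k F hF0 hFm w hinj hstep
    have hd : ∀ x, zdiv F' x = (if x = u₁ then 1 else 0) + (if x = u₂ then 1 else 0)
        - (if x = v₁ then 1 else 0) - (if x = v₂ then 1 else 0) := by
      intro x
      rw [h'div x, hFdiv x, h0, hl]
      ring
    have hsu₁ : 0 < zdiv F' u₁ := by
      rw [hd, if_pos rfl, if_neg h11, if_neg h12]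
      split_ifs <;> omega
    obtain ⟨t₁, p₁, ht₁neg, hp₁, hp₁le, hp₁div⟩ := extract h'0 hsu₁
    have ht₁ : t₁ = v₁ ∨ t₁ = v₂ := by
      by_contra hc
      push_neg at hc
      rw [hd, if_neg hc.1, if_neg hc.2] at ht₁neg
      split_ifs at ht₁neg <;> omega
    have h''0 : ∀ u v, 0 ≤ F' u v - (p₁ u v : ℤ) := fun u v => by
      have := hp₁le u v; omega
    have h''div : ∀ x, zdiv (fun u v => F' u v - (p₁ u v : ℤ)) x
        = (if x = u₁ then 1 else 0) + (if x = u₂ then 1 else 0)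
          - (if x = v₁ then 1 else 0) - (if x = v₂ then 1 else 0)
          - (if x = u₁ then 1 else 0) + (if x = t₁ then 1 else 0) := by
      intro x
      rw [hp₁div x, hd x]
    have hsu₂ : 0 < zdiv (fun u v => F' u v - (p₁ u v : ℤ)) u₂ := by
      rw [h''div]
      have hu₂t₁ : u₂ ≠ t₁ := by
        rcases ht₁ with h | h <;> rw [h] <;> assumption
      rw [if_neg h21, if_neg h22, if_neg hu₂t₁, if_pos rfl]
      split_ifs <;> omega
    obtain ⟨t₂, p₂, ht₂neg, hp₂, hp₂le, -⟩ := extract h''0 hsu₂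
    rw [h''div] at ht₂neg
    have hbound : ∀ u v, p₁ u v + p₂ u v ≤ m u v := by
      intro u v
      have h1 := hp₁le u v
      have h2 := hp₂le u v
      have h3 := h'm u v
      omega
    have hmatch : (t₁ = v₁ ∧ t₂ = v₂) ∨ (t₁ = v₂ ∧ t₂ = v₁) := by
      rcases ht₁ with h | h <;> subst h
      · left
        refine ⟨rfl, ?_⟩
        by_contra hc
        rw [if_neg hc] at ht₂neg
        split_ifs at ht₂neg <;> omega
      · right
        refine ⟨rfl, ?_⟩
        by_contra hc
        rw [if_neg hc] at ht₂neg
        split_ifs at ht₂neg <;> omega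
    rcases hmatch with ⟨ha, hb⟩ | ⟨ha, hb⟩
    · exact hno ⟨p₁, p₂, Or.inl ⟨ha ▸ hp₁, hb ▸ hp₂⟩, hbound⟩
    · exact hno ⟨p₁, p₂, Or.inr ⟨ha ▸ hp₁, hb ▸ hp₂⟩, hbound⟩
  · -- no augmenting path: R is the required cut
    have hu₂R : u₂ ∈ R := Finset.mem_filter.mpr ⟨Finset.mem_univ _, Relation.ReflTransGen.refl⟩
    have hRne : R.Nonempty := ⟨u₂, hu₂R⟩
    have hRuniv : R ≠ Finset.univ := fun h => hv₂ (by rw [h]; exact Finset.mem_univ v₂)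
    have hclosed : ∀ a ∈ R, ∀ b ∈ Rᶜ, F a b = (m a b : ℤ) ∧ F b a = 0 := by
      intro a ha b hb
      have hb' : b ∉ R := Finset.mem_compl.mp hb
      have hnr : ¬ r a b := fun hrab => hb' (Finset.mem_filter.mpr
        ⟨Finset.mem_univ _, (Finset.mem_filter.mp ha).2.tail hrab⟩)
      have h1 : ¬ F a b < (m a b : ℤ) := fun h => hnr (Or.inl h)
      have h2 : ¬ (0:ℤ) < F b a := fun h => hnr (Or.inr h)
      exact ⟨le_antisymm (hFm a b) (not_lt.mp h1), le_antisymm (not_lt.mp h2) (hF0 b a)⟩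
    have hsum := sum_zdiv F R
    have hLHS : ∑ x ∈ R, zdiv F x
        = (if u₁ ∈ R then 1 else 0) - (if v₁ ∈ R then (1:ℤ) else 0) := by
      rw [Finset.sum_congr rfl (fun x _ => hFdiv x), Finset.sum_sub_distrib,
        Finset.sum_ite_eq' R u₁ (fun _ => (1:ℤ)), Finset.sum_ite_eq' R v₁ (fun _ => (1:ℤ))]
    have hcut1 : ∑ a ∈ R, ∑ b ∈ Rᶜ, F a b = ∑ a ∈ R, ∑ b ∈ Rᶜ, (m a b : ℤ) :=
      Finset.sum_congr rfl fun a ha => Finset.sum_congr rfl fun b hb => (hclosed a ha b hb).1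
    have hcut2 : ∑ b ∈ Rᶜ, ∑ a ∈ R, F b a = 0 :=
      Finset.sum_eq_zero fun b hb => Finset.sum_eq_zero fun a ha => (hclosed a ha b hb).2
    rw [hLHS, hcut1, hcut2] at hsum
    have hle1 : (∑ a ∈ R, ∑ b ∈ Rᶜ, (m a b : ℤ)) ≤ 1 := by
      split_ifs at hsum <;> omega
    have hle1' : ∑ a ∈ R, ∑ b ∈ Rᶜ, m a b ≤ 1 := by
      have : ((∑ a ∈ R, ∑ b ∈ Rᶜ, m a b : ℕ) : ℤ) ≤ 1 := by push_cast; exact hle1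
      exact_mod_cast this
    have hge1 := cut_pos hm hconn hRne hRuniv
    have hone : ∑ a ∈ R, ∑ b ∈ Rᶜ, m a b = 1 := le_antisymm hle1' hge1
    refine ⟨R, hRne, hRuniv, hone, ?_⟩
    rw [← eulerian_cut hm]
    exact hone
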